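/- Let a > b > 0 and set s' = sqrt((2*b² + a*b)/(2*a² + a*b)), α = s'*a, β = b, and δ = sqrt(α⁴ − α²β² + β⁴). Then (α² + δ)/β = a + b. -/

import Mathlib

/-- For `a > b > 0`, `s' = √((2b² + ab)/(2a² + ab))`, `α = s'·a`, `β = b`,
`δ = √(α⁴ - α²β² + β⁴)`, one has `(α² + δ)/β = a + b`: the minor semi-axis of
the excentral ellipse of the scaled confocal pair equals the circumradius. -/
theorem excentral_circumradius (a b : ℝ) (hb : 0 < b) (hab : b < a)
    (s' α β δ : ℝ)
    (hs' : s' = Real.sqrt ((2 * b ^ 2 + a * b) / (2 * a ^ 2 + a * b)))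
    (hα : α = s' * a) (hβ : β = b)
    (hδ : δ = Real.sqrt (α ^ 4 - α ^ 2 * β ^ 2 + β ^ 4)) :
    (α ^ 2 + δ) / β = a + b := by
  have ha : 0 < a := hb.trans hab
  have hden : (0:ℝ) < 2 * a ^ 2 + a * b := by positivity
  have hs2 : s' ^ 2 = (2 * b ^ 2 + a * b) / (2 * a ^ 2 + a * b) := by
    rw [hs', Real.sq_sqrt]
    positivity
  have hα2 : α ^ 2 = a * b * (a + 2 * b) / (2 * a + b) := by
    rw [hα, mul_pow, hs2]
    field_simp
    ring
  have hkey : δ = b * (a + b) - α ^ 2 := by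
    rw [hδ, hβ]
    rw [show α ^ 4 - α ^ 2 * b ^ 2 + b ^ 4 = (b * (a + b) - α ^ 2) ^ 2 by
      have h2ab : (2 * a + b) ≠ 0 := by positivity
      have : α ^ 2 * (2 * a + b) = a * b * (a + 2 * b) := by
        rw [hα2]; field_simp
      nlinarith [this]]
    apply Real.sqrt_sq
    rw [hα2]
    rw [sub_nonneg, div_le_iff₀ (by positivity : (0:ℝ) < 2 * a + b)]
    nlinarith
  rw [hkey, hβ]
  field_simp
  ring
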